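/- Let f be a nc function on a nc set Ω ⊆ M_nc. Suppose X ∈ Ω_n, Y ∈ Ω_m and Z ∈ M^{n×m} are such that the block matrix [[X, Z],[0, Y]] belongs to Ω_{n+m}. Then f([[X, Z],[0, Y]]) is block upper triangular with (1,1) block f(X), (2,2) block f(Y) and (2,1) block 0; denote its (1,2) block by Δ(Z) ∈ N^{n×m}. Moreover, if r ∈ R is such that [[X, rZ],[0, Y]] also belongs to Ω_{n+m}, then the (1,2) block of f([[X, rZ],[0, Y]]) equals r·Δ(Z). -/

import Mathlib

open Matrix

/-- Product of a scalar matrix with a matrix over a module. -/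
def scalMul {R : Type*} [CommRing R] {M : Type*} [AddCommGroup M] [Module R M]
    {p n m : ℕ} (S : Matrix (Fin p) (Fin n) R) (X : Matrix (Fin n) (Fin m) M) :
    Matrix (Fin p) (Fin m) M :=
  Matrix.of fun i j => ∑ k, S i k • X k j

/-- Product of a matrix over a module with a scalar matrix. -/
def mulScal {R : Type*} [CommRing R] {M : Type*} [AddCommGroup M] [Module R M]
    {n m q : ℕ} (X : Matrix (Fin n) (Fin m) M) (T : Matrix (Fin m) (Fin q) R) :
    Matrix (Fin n) (Fin q) M :=
  Matrix.of fun i j => ∑ k, T k j • X i k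

/-- Direct sum of two square matrices over a module. -/
def dSum {M : Type*} [AddCommGroup M] {n m : ℕ}
    (X : Matrix (Fin n) (Fin n) M) (Y : Matrix (Fin m) (Fin m) M) :
    Matrix (Fin (n + m)) (Fin (n + m)) M :=
  (Matrix.reindex finSumFinEquiv finSumFinEquiv) (Matrix.fromBlocks X 0 0 Y)

/-- Block upper triangular 2×2 block matrix `[[X, Z],[0, Y]]`. -/
def upTri {M : Type*} [AddCommGroup M] {n m : ℕ}
    (X : Matrix (Fin n) (Fin n) M) (Z : Matrix (Fin n) (Fin m) M)
    (Y : Matrix (Fin m) (Fin m) M) :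
    Matrix (Fin (n + m)) (Fin (n + m)) M :=
  (Matrix.reindex finSumFinEquiv finSumFinEquiv) (Matrix.fromBlocks X Z 0 Y)

/-- A noncommutative (nc) set: closed under direct sums. -/
def IsNCSet {M : Type*} [AddCommGroup M]
    (Ω : ∀ n : ℕ, Set (Matrix (Fin n) (Fin n) M)) : Prop :=
  ∀ (n m : ℕ) (X : Matrix (Fin n) (Fin n) M) (Y : Matrix (Fin m) (Fin m) M),
    X ∈ Ω n → Y ∈ Ω m → dSum X Y ∈ Ω (n + m)

/-- `f` respects direct sums on `Ω`. -/
def RespectsDirSums {M N : Type*} [AddCommGroup M] [AddCommGroup N]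
    (Ω : ∀ n : ℕ, Set (Matrix (Fin n) (Fin n) M))
    (f : ∀ n : ℕ, Matrix (Fin n) (Fin n) M → Matrix (Fin n) (Fin n) N) : Prop :=
  ∀ (n m : ℕ) (X : Matrix (Fin n) (Fin n) M) (Y : Matrix (Fin m) (Fin m) M),
    X ∈ Ω n → Y ∈ Ω m → f (n + m) (dSum X Y) = dSum (f n X) (f m Y)

/-- `f` respects similarities on `Ω`. -/
def RespectsSim (R : Type*) [CommRing R] {M N : Type*} [AddCommGroup M] [Module R M]
    [AddCommGroup N] [Module R N]
    (Ω : ∀ n : ℕ, Set (Matrix (Fin n) (Fin n) M))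
    (f : ∀ n : ℕ, Matrix (Fin n) (Fin n) M → Matrix (Fin n) (Fin n) N) : Prop :=
  ∀ (n : ℕ) (X : Matrix (Fin n) (Fin n) M) (S T : Matrix (Fin n) (Fin n) R),
    X ∈ Ω n → S * T = 1 → T * S = 1 → scalMul S (mulScal X T) ∈ Ω n →
    f n (scalMul S (mulScal X T)) = scalMul S (mulScal (f n X) T)

/-- `f` respects intertwining on `Ω`: `X T = T Y` implies `f(X) T = T f(Y)`. -/
def RespectsIntertwining (R : Type*) [CommRing R] {M N : Type*} [AddCommGroup M]
    [Module R M] [AddCommGroup N] [Module R N]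
    (Ω : ∀ n : ℕ, Set (Matrix (Fin n) (Fin n) M))
    (f : ∀ n : ℕ, Matrix (Fin n) (Fin n) M → Matrix (Fin n) (Fin n) N) : Prop :=
  ∀ (n m : ℕ) (X : Matrix (Fin n) (Fin n) M) (Y : Matrix (Fin m) (Fin m) M)
    (T : Matrix (Fin n) (Fin m) R),
    X ∈ Ω n → Y ∈ Ω m → mulScal X T = scalMul T Y →
    mulScal (f n X) T = scalMul T (f m Y)

/-- The (1,1) block of an `(n+m)×(n+m)` matrix. -/
def blk11 {N : Type*} {n m : ℕ} (W : Matrix (Fin (n + m)) (Fin (n + m)) N) :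
    Matrix (Fin n) (Fin n) N :=
  Matrix.toBlocks₁₁ ((Matrix.reindex finSumFinEquiv.symm finSumFinEquiv.symm) W)

/-- The (1,2) block of an `(n+m)×(n+m)` matrix. -/
def blk12 {N : Type*} {n m : ℕ} (W : Matrix (Fin (n + m)) (Fin (n + m)) N) :
    Matrix (Fin n) (Fin m) N :=
  Matrix.toBlocks₁₂ ((Matrix.reindex finSumFinEquiv.symm finSumFinEquiv.symm) W)

/-- The (2,1) block of an `(n+m)×(n+m)` matrix. -/
def blk21 {N : Type*} {n m : ℕ} (W : Matrix (Fin (n + m)) (Fin (n + m)) N) :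
    Matrix (Fin m) (Fin n) N :=
  Matrix.toBlocks₂₁ ((Matrix.reindex finSumFinEquiv.symm finSumFinEquiv.symm) W)

/-- The (2,2) block of an `(n+m)×(n+m)` matrix. -/
def blk22 {N : Type*} {n m : ℕ} (W : Matrix (Fin (n + m)) (Fin (n + m)) N) :
    Matrix (Fin m) (Fin m) N :=
  Matrix.toBlocks₂₂ ((Matrix.reindex finSumFinEquiv.symm finSumFinEquiv.symm) W)

open Matrix

section Aux

variable {R : Type*} [CommRing R] {M : Type*} [AddCommGroup M] [Module R M]

/-- General-index version of `scalMul`. -/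
def smul' {l n m : Type*} [Fintype n] (S : Matrix l n R) (X : Matrix n m M) :
    Matrix l m M :=
  Matrix.of fun i j => ∑ k, S i k • X k j

/-- General-index version of `mulScal`. -/
def mul' {l n m : Type*} [Fintype n] (X : Matrix l n M) (T : Matrix n m R) :
    Matrix l m M :=
  Matrix.of fun i j => ∑ k, T k j • X i k


theorem scalMul_eq {p n m : ℕ} (S : Matrix (Fin p) (Fin n) R) (X : Matrix (Fin n) (Fin m) M) :
    scalMul S X = smul' S X := rfl

theorem mulScal_eq {n m q : ℕ} (X : Matrix (Fin n) (Fin m) M) (T : Matrix (Fin m) (Fin q) R) :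
    mulScal X T = mul' X T := rfl

theorem smul'_reindex {l n m l' n' m' : Type*} [Fintype n] [Fintype n']
    (e₁ : l ≃ l') (e₂ : n ≃ n') (e₃ : m ≃ m')
    (S : Matrix l n R) (X : Matrix n m M) :
    smul' (Matrix.reindex e₁ e₂ S) (Matrix.reindex e₂ e₃ X) =
      Matrix.reindex e₁ e₃ (smul' S X) := by
  ext i j
  simp only [smul', Matrix.reindex_apply, Matrix.submatrix_apply, Matrix.of_apply]
  exact Equiv.sum_comp e₂.symm fun k => S (e₁.symm i) k • X k (e₃.symm j)

theorem mul'_reindex {l n m l' n' m' : Type*} [Fintype n] [Fintype n']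
    (e₁ : l ≃ l') (e₂ : n ≃ n') (e₃ : m ≃ m')
    (X : Matrix l n M) (T : Matrix n m R) :
    mul' (Matrix.reindex e₁ e₂ X) (Matrix.reindex e₂ e₃ T) =
      Matrix.reindex e₁ e₃ (mul' X T) := by
  ext i j
  simp only [mul', Matrix.reindex_apply, Matrix.submatrix_apply, Matrix.of_apply]
  exact Equiv.sum_comp e₂.symm fun k => T k (e₃.symm j) • X (e₁.symm i) k

theorem smul'_fromBlocks {l₁ l₂ n₁ n₂ m₁ m₂ : Type*} [Fintype n₁] [Fintype n₂]
    (A : Matrix l₁ n₁ R) (B : Matrix l₁ n₂ R) (C : Matrix l₂ n₁ R) (D : Matrix l₂ n₂ R)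
    (X : Matrix n₁ m₁ M) (Z : Matrix n₁ m₂ M) (W : Matrix n₂ m₁ M) (Y : Matrix n₂ m₂ M) :
    smul' (Matrix.fromBlocks A B C D) (Matrix.fromBlocks X Z W Y) =
      Matrix.fromBlocks (smul' A X + smul' B W) (smul' A Z + smul' B Y)
        (smul' C X + smul' D W) (smul' C Z + smul' D Y) := by
  ext i j
  rcases i with i | i <;> rcases j with j | j <;>
    simp [smul', Fintype.sum_sum_type]

theorem mul'_fromBlocks {l₁ l₂ n₁ n₂ m₁ m₂ : Type*} [Fintype n₁] [Fintype n₂]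
    (X : Matrix l₁ n₁ M) (Z : Matrix l₁ n₂ M) (W : Matrix l₂ n₁ M) (Y : Matrix l₂ n₂ M)
    (A : Matrix n₁ m₁ R) (B : Matrix n₁ m₂ R) (C : Matrix n₂ m₁ R) (D : Matrix n₂ m₂ R) :
    mul' (Matrix.fromBlocks X Z W Y) (Matrix.fromBlocks A B C D) =
      Matrix.fromBlocks (mul' X A + mul' Z C) (mul' X B + mul' Z D)
        (mul' W A + mul' Y C) (mul' W B + mul' Y D) := by
  ext i j
  rcases i with i | i <;> rcases j with j | j <;>
    simp [mul', Fintype.sum_sum_type]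

theorem smul'_one {n m : Type*} [Fintype n] [DecidableEq n] (X : Matrix n m M) :
    smul' (1 : Matrix n n R) X = X := by
  ext i j
  simp [smul', Matrix.one_apply, ite_smul]

theorem smul'_smul_one {n m : Type*} [Fintype n] [DecidableEq n] (r : R) (X : Matrix n m M) :
    smul' (r • (1 : Matrix n n R)) X = r • X := by
  ext i j
  simp [smul', Matrix.one_apply, ite_smul, mul_smul, Matrix.smul_apply, smul_ite]

theorem smul'_zero_left {l n m : Type*} [Fintype n] (X : Matrix n m M) :
    smul' (0 : Matrix l n R) X = 0 := by
  ext i j; simp [smul']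

theorem smul'_zero_right {l n m : Type*} [Fintype n] (S : Matrix l n R) :
    smul' S (0 : Matrix n m M) = 0 := by
  ext i j; simp [smul']

theorem mul'_one {l n : Type*} [Fintype n] [DecidableEq n] (X : Matrix l n M) :
    mul' X (1 : Matrix n n R) = X := by
  ext i j
  simp [mul', Matrix.one_apply, ite_smul]

theorem mul'_smul_one {l n : Type*} [Fintype n] [DecidableEq n] (r : R) (X : Matrix l n M) :
    mul' X (r • (1 : Matrix n n R)) = r • X := by
  ext i j
  simp [mul', Matrix.one_apply, ite_smul, mul_smul, Matrix.smul_apply, smul_ite]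

theorem mul'_zero_right {l n m : Type*} [Fintype n] (X : Matrix l n M) :
    mul' X (0 : Matrix n m R) = 0 := by
  ext i j; simp [mul']

theorem mul'_zero_left {l n m : Type*} [Fintype n] (T : Matrix n m R) :
    mul' (0 : Matrix l n M) T = 0 := by
  ext i j; simp [mul']

theorem mul'_neg {l n m : Type*} [Fintype n] (X : Matrix l n M) (T : Matrix n m R) :
    mul' X (-T) = - mul' X T := by
  ext i j; simp [mul', Finset.sum_neg_distrib]

end Aux

section Inter

variable {R : Type*} [CommRing R] {M : Type*} [AddCommGroup M] [Module R M]
  {N : Type*} [AddCommGroup N] [Module R N]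

theorem blocks_decomp {n m : ℕ} (W : Matrix (Fin (n + m)) (Fin (n + m)) N) :
    W = Matrix.reindex finSumFinEquiv finSumFinEquiv
      (Matrix.fromBlocks (blk11 W) (blk12 W) (blk21 W) (blk22 W)) := by
  rw [blk11, blk12, blk21, blk22, Matrix.fromBlocks_toBlocks, ← Matrix.reindex_symm,
    Equiv.apply_symm_apply]

theorem reindex_fromBlocks_inj {n m : ℕ}
    {A A' : Matrix (Fin n) (Fin n) N} {B B' : Matrix (Fin n) (Fin m) N}
    {C C' : Matrix (Fin m) (Fin n) N} {D D' : Matrix (Fin m) (Fin m) N}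
    (h : Matrix.reindex finSumFinEquiv finSumFinEquiv (Matrix.fromBlocks A B C D) =
        Matrix.reindex finSumFinEquiv finSumFinEquiv (Matrix.fromBlocks A' B' C' D')) :
    A = A' ∧ B = B' ∧ C = C' ∧ D = D' := by
  have := (Matrix.reindex finSumFinEquiv finSumFinEquiv).injective h
  rwa [Matrix.fromBlocks_inj] at this

/-- Intertwining lemma: nc functions respect intertwinings. -/
theorem intertwine
    (Ω : ∀ n : ℕ, Set (Matrix (Fin n) (Fin n) M))
    (f : ∀ n : ℕ, Matrix (Fin n) (Fin n) M → Matrix (Fin n) (Fin n) N)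
    (hΩ : IsNCSet Ω) (hds : RespectsDirSums Ω f) (hsim : RespectsSim R Ω f)
    {n m : ℕ} (X : Matrix (Fin n) (Fin n) M) (Y : Matrix (Fin m) (Fin m) M)
    (T : Matrix (Fin n) (Fin m) R) (hX : X ∈ Ω n) (hY : Y ∈ Ω m)
    (hT : mul' X T = smul' T Y) :
    mul' (f n X) T = smul' T (f m Y) := by
  classical
  set e : Fin n ⊕ Fin m ≃ Fin (n + m) := finSumFinEquiv with he
  set S : Matrix (Fin (n + m)) (Fin (n + m)) R :=
    Matrix.reindex e e (Matrix.fromBlocks 1 T 0 1) with hS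
  set S' : Matrix (Fin (n + m)) (Fin (n + m)) R :=
    Matrix.reindex e e (Matrix.fromBlocks 1 (-T) 0 1) with hS'
  have hSS' : S * S' = 1 := by
    rw [hS, hS', Matrix.reindex_apply, Matrix.reindex_apply,
      Matrix.submatrix_mul_equiv _ _ _ e.symm _, Matrix.fromBlocks_multiply]
    simp [Matrix.fromBlocks_one, Matrix.submatrix_one_equiv]
  have hS'S : S' * S = 1 := by
    rw [hS, hS', Matrix.reindex_apply, Matrix.reindex_apply,
      Matrix.submatrix_mul_equiv _ _ _ e.symm _, Matrix.fromBlocks_multiply]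
    simp [Matrix.fromBlocks_one, Matrix.submatrix_one_equiv]
  have hkey : smul' S (mul' (dSum X Y) S') = dSum X Y := by
    rw [dSum, hS, hS', mul'_reindex, smul'_reindex, mul'_fromBlocks, smul'_fromBlocks]
    simp [mul'_one, mul'_zero_left, mul'_zero_right, mul'_neg, smul'_one, smul'_zero_left,
      smul'_zero_right, hT, he]
  have hmemD : dSum X Y ∈ Ω (n + m) := hΩ n m X Y hX hY
  have hmem2 : scalMul S (mulScal (dSum X Y) S') ∈ Ω (n + m) := by
    rw [scalMul_eq, mulScal_eq, hkey]; exact hmemD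
  have h2 := hsim (n + m) (dSum X Y) S S' hmemD hSS' hS'S hmem2
  rw [scalMul_eq, mulScal_eq, scalMul_eq, mulScal_eq, hkey, hds n m X Y hX hY] at h2
  -- h2 : dSum (f n X) (f m Y) = smul' S (mul' (dSum (f n X) (f m Y)) S')
  simp only [dSum] at h2
  rw [hS, hS', mul'_reindex, smul'_reindex, mul'_fromBlocks, smul'_fromBlocks] at h2
  simp only [mul'_one, mul'_zero_left, mul'_zero_right, mul'_neg, smul'_one, smul'_zero_left,
    smul'_zero_right, add_zero, zero_add, neg_zero] at h2
  obtain ⟨-, h12, -, -⟩ := reindex_fromBlocks_inj h2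
  rw [eq_comm, neg_add_eq_zero] at h12
  exact h12

end Inter
/-- For a nc function `f` on a nc set `Ω`, if the block upper triangular
matrix `[[X, Z],[0, Y]]` lies in `Ω`, then `f([[X, Z],[0, Y]])` is block upper triangular
with diagonal blocks `f(X)`, `f(Y)` and zero lower left block; moreover if `[[X, rZ],[0, Y]]`
also lies in `Ω`, then the (1,2) block of its `f`-image is `r` times the (1,2) block
`Δ(Z)` of `f([[X, Z],[0, Y]])`. -/
theorem nc_function_on_upper_triangular
    {R : Type*} [CommRing R] {M : Type*} [AddCommGroup M] [Module R M]
    {N : Type*} [AddCommGroup N] [Module R N]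
    (Ω : ∀ n : ℕ, Set (Matrix (Fin n) (Fin n) M))
    (f : ∀ n : ℕ, Matrix (Fin n) (Fin n) M → Matrix (Fin n) (Fin n) N)
    (hΩ : IsNCSet Ω) (hds : RespectsDirSums Ω f) (hsim : RespectsSim R Ω f)
    {n m : ℕ} (X : Matrix (Fin n) (Fin n) M) (Y : Matrix (Fin m) (Fin m) M)
    (Z : Matrix (Fin n) (Fin m) M)
    (hX : X ∈ Ω n) (hY : Y ∈ Ω m) (hZ : upTri X Z Y ∈ Ω (n + m)) :
    blk11 (f (n + m) (upTri X Z Y)) = f n X ∧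
    blk22 (f (n + m) (upTri X Z Y)) = f m Y ∧
    blk21 (f (n + m) (upTri X Z Y)) = 0 ∧
    ∀ r : R, upTri X (r • Z) Y ∈ Ω (n + m) →
      blk12 (f (n + m) (upTri X (r • Z) Y)) = r • blk12 (f (n + m) (upTri X Z Y)) := by
  classical
  have hmemD : dSum X Y ∈ Ω (n + m) := hΩ n m X Y hX hY
  have hfd := hds n m X Y hX hY
  set W' := f (n + m) (upTri X Z Y) with hW'
  -- Part 1: intertwining with P = [[1,0],[0,0]]
  have hP : mul' (upTri X Z Y)
      (Matrix.reindex finSumFinEquiv finSumFinEquiv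
        (Matrix.fromBlocks (1 : Matrix (Fin n) (Fin n) R) 0 0 0)) =
      smul' (Matrix.reindex finSumFinEquiv finSumFinEquiv
        (Matrix.fromBlocks (1 : Matrix (Fin n) (Fin n) R) 0 0 0)) (dSum X Y) := by
    rw [upTri, dSum, mul'_reindex, smul'_reindex, mul'_fromBlocks, smul'_fromBlocks]
    simp [mul'_one, mul'_zero_left, mul'_zero_right, smul'_one, smul'_zero_left,
      smul'_zero_right]
  have h1 := intertwine Ω f hΩ hds hsim (upTri X Z Y) (dSum X Y) _ hZ hmemD hP
  rw [hfd, ← hW', blocks_decomp W'] at h1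
  simp only [dSum] at h1
  rw [mul'_reindex, smul'_reindex, mul'_fromBlocks, smul'_fromBlocks] at h1
  simp only [mul'_one, mul'_zero_left, mul'_zero_right, smul'_one, smul'_zero_left,
    smul'_zero_right, add_zero, zero_add] at h1
  obtain ⟨h11, -, h21, -⟩ := reindex_fromBlocks_inj h1
  -- Part 2: intertwining with Q = [[0,0],[0,1]]
  have hQ : mul' (dSum X Y)
      (Matrix.reindex finSumFinEquiv finSumFinEquiv
        (Matrix.fromBlocks (0 : Matrix (Fin n) (Fin n) R) 0 0 1)) =
      smul' (Matrix.reindex finSumFinEquiv finSumFinEquiv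
        (Matrix.fromBlocks (0 : Matrix (Fin n) (Fin n) R) 0 0 1)) (upTri X Z Y) := by
    rw [upTri, dSum, mul'_reindex, smul'_reindex, mul'_fromBlocks, smul'_fromBlocks]
    simp [mul'_one, mul'_zero_left, mul'_zero_right, smul'_one, smul'_zero_left,
      smul'_zero_right]
  have h2 := intertwine Ω f hΩ hds hsim (dSum X Y) (upTri X Z Y) _ hmemD hZ hQ
  rw [hfd, ← hW', blocks_decomp W'] at h2
  simp only [dSum] at h2
  rw [mul'_reindex, smul'_reindex, mul'_fromBlocks, smul'_fromBlocks] at h2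
  simp only [mul'_one, mul'_zero_left, mul'_zero_right, smul'_one, smul'_zero_left,
    smul'_zero_right, add_zero, zero_add] at h2
  obtain ⟨-, -, -, h22⟩ := reindex_fromBlocks_inj h2
  refine ⟨h11, h22.symm, h21, ?_⟩
  -- Part 3: scaling
  intro r hr
  set Wr' := f (n + m) (upTri X (r • Z) Y) with hWr'
  have hTr : mul' (upTri X (r • Z) Y)
      (Matrix.reindex finSumFinEquiv finSumFinEquiv
        (Matrix.fromBlocks (r • (1 : Matrix (Fin n) (Fin n) R)) 0 0 1)) =
      smul' (Matrix.reindex finSumFinEquiv finSumFinEquiv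
        (Matrix.fromBlocks (r • (1 : Matrix (Fin n) (Fin n) R)) 0 0 1)) (upTri X Z Y) := by
    rw [upTri, upTri, mul'_reindex, smul'_reindex, mul'_fromBlocks, smul'_fromBlocks]
    simp [mul'_one, mul'_zero_left, mul'_zero_right, mul'_smul_one, smul'_one,
      smul'_zero_left, smul'_zero_right, smul'_smul_one]
  have h4 := intertwine Ω f hΩ hds hsim (upTri X (r • Z) Y) (upTri X Z Y) _ hr hZ hTr
  rw [← hW', ← hWr', blocks_decomp W', blocks_decomp Wr'] at h4
  rw [mul'_reindex, smul'_reindex, mul'_fromBlocks, smul'_fromBlocks] at h4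
  simp only [mul'_one, mul'_zero_left, mul'_zero_right, mul'_smul_one, smul'_one,
    smul'_zero_left, smul'_zero_right, smul'_smul_one, add_zero, zero_add] at h4
  obtain ⟨-, h12, -, -⟩ := reindex_fromBlocks_inj h4
  exact h12
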